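/- If a word w has period p and |v| ≥ p for some factor occurrence v^p inside w with |v| ≥ 1, then w has period gcd(p, |v|). More precisely: if w contains a factor v^p (p copies of a nonempty word v) and w has period p, then w has period gcd(p, |v|). -/

import Mathlib

/-- A word `w` has period `p` if letters at distance `p` coincide. -/
def HasPeriod {α : Type*} (w : List α) (p : ℕ) : Prop :=
  ∀ i, i + p < w.length → w[i]? = w[i + p]?

/-- `npow n v` is the `n`-fold repetition `v^n`. -/
def npow {α : Type*} (n : ℕ) (v : List α) : List α :=
  (List.replicate n v).flatten

namespace PeriodAux

lemma npow_succ {α : Type*} (n : ℕ) (v : List α) : npow (n+1) v = v ++ npow n v := by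
  simp [npow, List.replicate_succ]

lemma npow_length {α : Type*} (n : ℕ) (v : List α) :
    (npow n v).length = n * v.length := by
  induction n with
  | zero => simp [npow]
  | succ n ih => rw [npow_succ, List.length_append, ih]; ring

lemma npow_get {α : Type*} (n : ℕ) (v : List α) :
    ∀ j, j < n * v.length → (npow n v)[j]? = v[j % v.length]? := by
  induction n with
  | zero => intro j hj; omega
  | succ n ih =>
    intro j hj
    rw [npow_succ]
    by_cases h : j < v.length
    · rw [List.getElem?_append_left h, Nat.mod_eq_of_lt h]
    · push_neg at h
      have hsm : (n+1) * v.length = n * v.length + v.length := Nat.succ_mul _ _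
      rw [List.getElem?_append_right h, ih _ (by omega)]
      congr 1
      have := Nat.mod_eq_sub_mod h
      omega

lemma chain {α : Type*} {w : List α} {p : ℕ} (hper : HasPeriod w p) :
    ∀ t i, i + t * p < w.length → w[i]? = w[i + t * p]? := by
  intro t
  induction t with
  | zero => intro i _; simp
  | succ t ih =>
    intro i hi
    have hsm : (t+1) * p = t * p + p := Nat.succ_mul _ _
    have h1 : i + p < w.length := by omega
    have := hper i h1
    rw [this]
    have := ih (i + p) (by omega)
    rw [this]
    congr 1
    omega

lemma eq_of_modEq {α : Type*} {w : List α} {p : ℕ} (hp : 0 < p) (hper : HasPeriod w p)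
    {i j : ℕ} (hmod : i % p = j % p) (hi : i < w.length) (hj : j < w.length) :
    w[i]? = w[j]? := by
  rcases le_total i j with h | h
  · obtain ⟨t, ht⟩ := (Nat.modEq_iff_dvd' h).mp hmod
    have hj' : j = i + t * p := by rw [Nat.mul_comm]; omega
    rw [hj']
    exact chain hper t i (hj' ▸ hj)
  · obtain ⟨t, ht⟩ := (Nat.modEq_iff_dvd' h).mp hmod.symm
    have hi' : i = j + t * p := by rw [Nat.mul_comm]; omega
    rw [hi']
    exact (chain hper t j (hi' ▸ hi)).symm

lemma exists_step (p q d k k' : ℕ) (hd : d = Nat.gcd p q) (hq : 0 < q)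
    (hk' : k' < q) (hmod : k % d = k' % d) :
    ∃ t : ℕ, (k + t * p) % q = k' := by
  have hdk : (d : ℤ) ∣ (k' : ℤ) - k := Nat.modEq_iff_dvd.mp hmod
  obtain ⟨m, hm⟩ := hdk
  have hbez : (d : ℤ) = p * Nat.gcdA p q + q * Nat.gcdB p q := by
    rw [hd]; exact Nat.gcd_eq_gcd_ab p q
  set A := Nat.gcdA p q
  set B := Nat.gcdB p q
  have hqz : (q : ℤ) ≠ 0 := by exact_mod_cast hq.ne'
  have hT0 : (0 : ℤ) ≤ (A * m) % q := Int.emod_nonneg _ hqz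
  set T : ℤ := (A * m) % q with hTdef
  refine ⟨T.toNat, ?_⟩
  have hTcast : (T.toNat : ℤ) = T := Int.toNat_of_nonneg hT0
  -- (k + T*p) ≡ k' [ZMOD q]
  have h1 : T ≡ A * m [ZMOD q] := Int.emod_emod_of_dvd _ dvd_rfl
  have h2 : (k : ℤ) + T * p ≡ (k : ℤ) + (A * m) * p [ZMOD q] :=
    ((h1.mul_right p).add_left k)
  have h3 : (k : ℤ) + (A * m) * p ≡ (k' : ℤ) [ZMOD q] := by
    have : (k' : ℤ) - ((k : ℤ) + (A * m) * p) = q * (B * m) := by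
      have : (k' : ℤ) = k + d * m := by omega
      rw [this, hbez]; ring
    exact Int.modEq_iff_dvd.mpr ⟨B * m, this⟩
  have h4 : (k : ℤ) + T * p ≡ (k' : ℤ) [ZMOD q] := h2.trans h3
  have h5 : ((k + T.toNat * p : ℕ) : ℤ) % q = (k' : ℤ) % q := by
    push_cast [hTcast]
    exact h4
  have h6 : (k' : ℤ) % q = k' := Int.emod_eq_of_lt (by positivity) (by exact_mod_cast hk')
  have : ((k + T.toNat * p) % q : ℕ) = ((k' : ℕ)) := by
    have := h5.trans h6
    exact_mod_cast (by push_cast; exact this : (((k + T.toNat * p) % q : ℕ) : ℤ) = (k' : ℤ))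
  exact this

lemma iterate_step {α : Type*} {v : List α} {p q : ℕ} (hq : 0 < q) (hqv : q = v.length)
    (hstep : ∀ k, k < q → v[k]? = v[(k + p) % q]?) :
    ∀ t k, k < q → v[k]? = v[(k + t * p) % q]? := by
  intro t
  induction t with
  | zero => intro k hk; simp [Nat.mod_eq_of_lt hk]
  | succ t ih =>
    intro k hk
    have h1 := ih k hk
    have h2 := hstep ((k + t * p) % q) (Nat.mod_lt _ hq)
    rw [h1, h2]
    congr 1
    rw [Nat.mod_add_mod]
    congr 1
    have : (t+1) * p = t * p + p := Nat.succ_mul _ _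
    omega

end PeriodAux

open PeriodAux in
/-- If a word `w` has period `p` and contains a factor `v^p` (p copies of a
nonempty word `v`), then `w` has period `gcd(p, |v|)`. -/
theorem period_of_iterated_factor {α : Type*} (w x v y : List α) (p : ℕ)
    (hp : 1 ≤ p) (hv : v ≠ [])
    (hw : w = x ++ npow p v ++ y) (hper : HasPeriod w p) :
    HasPeriod w (Nat.gcd p v.length) := by
  rcases eq_or_lt_of_le hp with hp1 | hp2
  · rw [← hp1, Nat.gcd_one_left]
    rw [← hp1] at hper
    exact hper
  set q := v.length with hq
  set s := x.length with hs
  set d := Nat.gcd p q with hd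
  have hqpos : 0 < q := List.length_pos_iff.mpr hv
  have hppos : 0 < p := hp
  have hdpos : 0 < d := Nat.gcd_pos_of_pos_left _ hppos
  have hdp : d ∣ p := Nat.gcd_dvd_left _ _
  have hdq : d ∣ q := Nat.gcd_dvd_right _ _
  have hwlen : w.length = s + p * q + y.length := by
    rw [hw]; simp [npow_length]; ring
  have hpq : p ≤ p * q := Nat.le_mul_of_pos_right _ hqpos
  have hsp : s ≤ p * s := Nat.le_mul_of_pos_left _ hppos
  -- values inside the factor
  have hC : ∀ j, j < p * q → w[s + j]? = v[j % q]? := by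
    intro j hj
    rw [hw, List.getElem?_append_left (by simp [npow_length, ← hq, ← hs]; omega),
      List.getElem?_append_right (by omega)]
    have : s + j - x.length = j := by omega
    rw [this]
    exact npow_get p v j hj
  -- one-step periodicity of v modulo q
  have hstep : ∀ k, k < q → v[k]? = v[(k + p) % q]? := by
    intro k hk
    by_cases hq1 : q = 1
    · have hk0 : k = 0 := by omega
      subst hk0
      simp [hq1, Nat.mod_one]
    · have hq2 : 2 ≤ q := by omega
      have hkp : k + p < p * q := by nlinarith
      have h1 := hper (s + k) (by omega)
      have h2 := hC k (by omega)
      have h3 := hC (k + p) hkp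
      rw [Nat.mod_eq_of_lt hk] at h2
      have : s + k + p = s + (k + p) := by omega
      rw [this] at h1
      rw [← h2, h1, h3]
  -- values of v depend only on residue mod d
  have hF : ∀ k k', k < q → k' < q → k % d = k' % d → v[k]? = v[k']? := by
    intro k k' hk hk' hmod
    obtain ⟨t, ht⟩ := exists_step p q d k k' hd hqpos hk' hmod
    rw [← ht]
    exact iterate_step hqpos hq hstep t k hk
  -- main argument
  intro i hi
  have hiw : i < w.length := by omega
  have hidw : i + d < w.length := hi
  set a' := (i + p * s - s) % p with ha'
  set b' := (i + d + p * s - s) % p with hb'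
  have ha'lt : a' < p := Nat.mod_lt _ hppos
  have hb'lt : b' < p := Nat.mod_lt _ hppos
  have hamod : (s + a') % p = i % p := by
    have h1 : s + a' ≡ s + (i + p * s - s) [MOD p] :=
      (Nat.mod_modEq _ p).add_left s
    have h2 : s + (i + p * s - s) = i + p * s := by omega
    have h3 : i ≡ i + p * s [MOD p] :=
      (Nat.modEq_iff_dvd' (by omega)).mpr ⟨s, by omega⟩
    exact (h1.trans (h2 ▸ h3.symm) : _)
  have hbmod : (s + b') % p = (i + d) % p := by
    have h1 : s + b' ≡ s + (i + d + p * s - s) [MOD p] :=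
      (Nat.mod_modEq _ p).add_left s
    have h2 : s + (i + d + p * s - s) = i + d + p * s := by omega
    have h3 : i + d ≡ i + d + p * s [MOD p] :=
      (Nat.modEq_iff_dvd' (by omega)).mpr ⟨s, by omega⟩
    exact (h1.trans (h2 ▸ h3.symm) : _)
  have haw : s + a' < w.length := by omega
  have hbw : s + b' < w.length := by omega
  have e1 : w[i]? = w[s + a']? :=
    eq_of_modEq hppos hper hamod.symm hiw haw
  have e2 : w[i + d]? = w[s + b']? :=
    eq_of_modEq hppos hper hbmod.symm hidw hbw
  have e3 : w[s + a']? = v[a' % q]? := hC a' (by omega)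
  have e4 : w[s + b']? = v[b' % q]? := hC b' (by omega)
  -- residues mod d agree
  have hdd : (a' % q) % d = (b' % q) % d := by
    have h1 : a' % q ≡ a' [MOD d] := (Nat.mod_modEq a' q).of_dvd hdq
    have h2 : b' % q ≡ b' [MOD d] := (Nat.mod_modEq b' q).of_dvd hdq
    have h3 : s + a' ≡ i [MOD d] := (Nat.ModEq.of_dvd hdp hamod : _)
    have h4 : s + b' ≡ i + d [MOD d] := (Nat.ModEq.of_dvd hdp hbmod : _)
    have h5 : i + d ≡ i [MOD d] := by
      have : i ≡ i + d [MOD d] := (Nat.modEq_iff_dvd' (by omega)).mpr ⟨1, by omega⟩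
      exact this.symm
    have h6 : s + a' ≡ s + b' [MOD d] := h3.trans ((h4.trans h5).symm)
    have h7 : a' ≡ b' [MOD d] := Nat.ModEq.add_left_cancel' s h6
    exact h1.trans (h7.trans h2.symm)
  have e5 : v[a' % q]? = v[b' % q]? :=
    hF _ _ (Nat.mod_lt _ hqpos) (Nat.mod_lt _ hqpos) hdd
  rw [e1, e2, e3, e4, e5]
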